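/- Let d₁,…,d_K ∈ ℝ^p and let F₁,…,F_L be symmetric positive semidefinite real p×p matrices such that the stacked matrix D̄ has rank p. Let P(β) = ∑_{k=1}^K |dₖᵀβ| + ∑_{ℓ=1}^L √(βᵀ F_ℓ β). Then c := ∫_{ℝ^p} exp(−P(β)) dβ is finite and positive, and for every λ > 0, ∫_{ℝ^p} exp(−λ P(β)) dβ = λ^{−p} · c. In particular, the normalizing constant of the structured sparse prior is proportional to λ^p. -/

import Mathlib

open MeasureTheory Matrix

section helpers
open Set

lemma integrable_exp_neg_mul_abs' {a : ℝ} (ha : 0 < a) :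
    Integrable (fun x : ℝ => Real.exp (-(a * |x|))) := by
  have h1 : IntegrableOn (fun x : ℝ => Real.exp (-(a * |x|))) (Ioi (0:ℝ)) := by
    refine (exp_neg_integrableOn_Ioi 0 ha).congr_fun (fun x hx => ?_) measurableSet_Ioi
    rw [abs_of_pos hx]; ring_nf
  have h2 : IntegrableOn (fun x : ℝ => Real.exp (-(a * |x|))) (Iic (0:ℝ)) := by
    rw [← Measure.map_neg_eq_self (volume : Measure ℝ)]
    have m : MeasurableEmbedding (fun x : ℝ => -x) :=
      (Homeomorph.neg ℝ).measurableEmbedding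
    rw [m.integrableOn_map_iff]
    simp_rw [Function.comp_def, abs_neg, neg_preimage, neg_Iic, neg_zero]
    exact (integrableOn_Ici_iff_integrableOn_Ioi).mpr h1
  have := h2.union h1
  rwa [Iic_union_Ioi, integrableOn_univ] at this

lemma integrable_exp_neg_mul_sum (p : ℕ) {a : ℝ} (ha : 0 < a) :
    Integrable (fun β : Fin p → ℝ => Real.exp (-(a * ∑ i, |β i|))) := by
  have h := MeasureTheory.Integrable.fintype_prod
    (f := fun (_ : Fin p) (x : ℝ) => Real.exp (-(a * |x|)))
    (fun _ => integrable_exp_neg_mul_abs' ha)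
  refine h.congr (Filter.Eventually.of_forall fun β => ?_)
  simp only [← Real.exp_sum, Finset.mul_sum, ← Finset.sum_neg_distrib]

end helpers

/-- When the stacked matrix `D̄` has full column rank, the normalizing constant
`c = ∫ exp(−P(β)) dβ` of the structured sparse prior is finite and positive, and for every
`λ > 0`, `∫ exp(−λ P(β)) dβ = λ^{−p} · c`. -/
theorem structured_sparse_normalizing_constant
    (p K L : ℕ)
    (d : Fin K → (Fin p → ℝ))
    (F : Fin L → Matrix (Fin p) (Fin p) ℝ)
    (hFsymm : ∀ ℓ, (F ℓ).IsSymm)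
    (hFpsd : ∀ ℓ, (F ℓ).PosSemidef)
    (hrank : (Matrix.of (Sum.elim d (fun li : Fin L × Fin p => F li.1 li.2))).rank = p)
    (P : (Fin p → ℝ) → ℝ)
    (hP : ∀ β, P β = (∑ k, |d k ⬝ᵥ β|) + ∑ ℓ, Real.sqrt (β ⬝ᵥ (F ℓ) *ᵥ β)) :
    Integrable (fun β : Fin p → ℝ => Real.exp (-P β)) volume ∧
      0 < ∫ β : Fin p → ℝ, Real.exp (-P β) ∧
      ∀ lam : ℝ, 0 < lam →
        (∫ β : Fin p → ℝ, Real.exp (-(lam * P β))) =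
          lam ^ (-(p : ℤ)) * ∫ β : Fin p → ℝ, Real.exp (-P β) := by
  have hQnonneg : ∀ (ℓ : Fin L) (β : Fin p → ℝ), 0 ≤ β ⬝ᵥ (F ℓ) *ᵥ β := by
    intro ℓ β
    have := (hFpsd ℓ).dotProduct_mulVec_nonneg β
    simpa using this
  have hPnonneg : ∀ β, 0 ≤ P β := by
    intro β
    rw [hP]
    have h1 : 0 ≤ ∑ k, |d k ⬝ᵥ β| := Finset.sum_nonneg fun k _ => abs_nonneg _
    have h2 : 0 ≤ ∑ ℓ, Real.sqrt (β ⬝ᵥ (F ℓ) *ᵥ β) :=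
      Finset.sum_nonneg fun ℓ _ => Real.sqrt_nonneg _
    linarith
  have hPcont : Continuous P := by
    have : P = fun β => (∑ k, |d k ⬝ᵥ β|) + ∑ ℓ, Real.sqrt (β ⬝ᵥ (F ℓ) *ᵥ β) :=
      funext hP
    rw [this]
    apply Continuous.add
    · apply continuous_finset_sum
      intro k _
      exact continuous_abs.comp (by unfold dotProduct; fun_prop)
    · apply continuous_finset_sum
      intro ℓ _
      exact Real.continuous_sqrt.comp (by simp only [dotProduct, Matrix.mulVec]; fun_prop)
  have hPhomog : ∀ (c : ℝ), 0 ≤ c → ∀ β, P (c • β) = c * P β := by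
    intro c hc β
    rw [hP, hP, mul_add, Finset.mul_sum, Finset.mul_sum]
    congr 1
    · refine Finset.sum_congr rfl fun k _ => ?_
      rw [dotProduct_smul, smul_eq_mul, abs_mul, abs_of_nonneg hc]
    · refine Finset.sum_congr rfl fun ℓ _ => ?_
      rw [Matrix.mulVec_smul, dotProduct_smul, smul_dotProduct, smul_eq_mul, smul_eq_mul,
        ← mul_assoc, Real.sqrt_mul (by positivity), Real.sqrt_mul_self hc]
  have hPzero : ∀ β, P β = 0 → β = 0 := by
    intro β hβ
    rw [hP] at hβ
    have h1 : ∑ k, |d k ⬝ᵥ β| = 0 := by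
      have h2 : 0 ≤ ∑ ℓ, Real.sqrt (β ⬝ᵥ (F ℓ) *ᵥ β) :=
        Finset.sum_nonneg fun ℓ _ => Real.sqrt_nonneg _
      have h3 : 0 ≤ ∑ k, |d k ⬝ᵥ β| := Finset.sum_nonneg fun k _ => abs_nonneg _
      linarith
    have h2 : ∑ ℓ, Real.sqrt (β ⬝ᵥ (F ℓ) *ᵥ β) = 0 := by
      have h3 : 0 ≤ ∑ k, |d k ⬝ᵥ β| := Finset.sum_nonneg fun k _ => abs_nonneg _
      linarith
    have hd : ∀ k, d k ⬝ᵥ β = 0 := by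
      intro k
      have := (Finset.sum_eq_zero_iff_of_nonneg (fun k _ => abs_nonneg _)).mp h1 k
        (Finset.mem_univ k)
      exact abs_eq_zero.mp this
    have hF : ∀ ℓ, (F ℓ) *ᵥ β = 0 := by
      intro ℓ
      have hs := (Finset.sum_eq_zero_iff_of_nonneg
        (fun ℓ _ => Real.sqrt_nonneg _)).mp h2 ℓ (Finset.mem_univ ℓ)
      have hq : β ⬝ᵥ (F ℓ) *ᵥ β = 0 := by
        have := Real.sqrt_eq_zero (hQnonneg ℓ β) |>.mp hs
        exact this
      have := ((hFpsd ℓ).dotProduct_mulVec_zero_iff β).mp (by simpa using hq)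
      exact this
    -- stacked matrix kills β
    set M := Matrix.of (Sum.elim d (fun li : Fin L × Fin p => F li.1 li.2)) with hM
    have hMβ : M.mulVecLin β = 0 := by
      funext j
      rcases j with k | li
      · simpa [M, Matrix.mulVecLin, Matrix.mulVec, Matrix.of_apply] using hd k
      · have := congrFun (hF li.1) li.2
        simpa [M, Matrix.mulVecLin, Matrix.mulVec, Matrix.of_apply] using this
    have hker : LinearMap.ker M.mulVecLin = ⊥ := by
      have h := LinearMap.finrank_range_add_finrank_ker M.mulVecLin
      rw [Module.finrank_fintype_fun_eq_card, Fintype.card_fin] at h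
      have hr : Module.finrank ℝ (LinearMap.range M.mulVecLin) = p := hrank
      have : Module.finrank ℝ (LinearMap.ker M.mulVecLin) = 0 := by omega
      exact Submodule.finrank_eq_zero.mp this
    have : β ∈ LinearMap.ker M.mulVecLin := hMβ
    rw [hker] at this
    simpa using this
  -- lower bound
  obtain ⟨a, ha, hab⟩ : ∃ a : ℝ, 0 < a ∧ ∀ β, a * ∑ i, |β i| ≤ P β := by
    rcases Nat.eq_zero_or_pos p with hp | hp
    · refine ⟨1, one_pos, fun β => ?_⟩
      subst hp
      simpa using hPnonneg β
    · haveI : Nonempty (Fin p) := ⟨⟨0, hp⟩⟩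
      have hsph : (Metric.sphere (0 : Fin p → ℝ) 1).Nonempty :=
        NormedSpace.sphere_nonempty.mpr zero_le_one
      obtain ⟨β₀, hβ₀, hmin⟩ :=
        (isCompact_sphere (0 : Fin p → ℝ) 1).exists_isMinOn hsph hPcont.continuousOn
      have hβ₀norm : ‖β₀‖ = 1 := by simpa using hβ₀
      have hε : 0 < P β₀ := by
        rcases (hPnonneg β₀).lt_or_eq with h | h
        · exact h
        · exfalso
          have := hPzero β₀ h.symm
          rw [this] at hβ₀norm
          simp at hβ₀norm
      refine ⟨P β₀ / p, by positivity, fun β => ?_⟩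
      rcases eq_or_ne β 0 with rfl | hβ
      · have : P 0 = 0 := by
          have := hPhomog 0 le_rfl 0
          simpa using this
        simp [this]
      · have hnorm : 0 < ‖β‖ := norm_pos_iff.mpr hβ
        have hunit : (‖β‖⁻¹ • β) ∈ Metric.sphere (0 : Fin p → ℝ) 1 := by
          simp [norm_smul, abs_of_pos (inv_pos.mpr hnorm), inv_mul_cancel₀ hnorm.ne']
        have h1 : P β₀ ≤ P (‖β‖⁻¹ • β) := hmin hunit
        have h2 : P (‖β‖⁻¹ • β) = ‖β‖⁻¹ * P β :=
          hPhomog _ (by positivity) β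
        have h3 : ‖β‖ * P β₀ ≤ P β := by
          rw [h2] at h1
          calc ‖β‖ * P β₀ ≤ ‖β‖ * (‖β‖⁻¹ * P β) := by
                exact mul_le_mul_of_nonneg_left h1 hnorm.le
            _ = P β := by field_simp
        have h4 : ∑ i, |β i| ≤ (p : ℝ) * ‖β‖ := by
          calc ∑ i, |β i| ≤ ∑ _i : Fin p, ‖β‖ := by
                refine Finset.sum_le_sum fun i _ => ?_
                simpa [Real.norm_eq_abs] using norm_le_pi_norm β i
            _ = (p : ℝ) * ‖β‖ := by simp [mul_comm]
        calc P β₀ / p * ∑ i, |β i| ≤ P β₀ / p * ((p : ℝ) * ‖β‖) := by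
              refine mul_le_mul_of_nonneg_left h4 (by positivity)
          _ = ‖β‖ * P β₀ := by
              field_simp
          _ ≤ P β := h3
  have hint : Integrable (fun β : Fin p → ℝ => Real.exp (-P β)) volume := by
    refine (integrable_exp_neg_mul_sum p ha).mono'
      ((Real.continuous_exp.comp hPcont.neg).aestronglyMeasurable) ?_
    refine Filter.Eventually.of_forall fun β => ?_
    rw [Real.norm_eq_abs, abs_of_pos (Real.exp_pos _)]
    exact Real.exp_le_exp.mpr (by linarith [hab β])
  refine ⟨hint, ?_, ?_⟩
  · rw [integral_pos_iff_support_of_nonneg (fun β => (Real.exp_pos _).le) hint]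
    have hsupp : Function.support (fun β : Fin p → ℝ => Real.exp (-P β)) = Set.univ := by
      ext β; simp [(Real.exp_pos _).ne']
    rw [hsupp]
    exact isOpen_univ.measure_pos volume Set.univ_nonempty
  · intro lam hlam
    have hmul : ∀ β : Fin p → ℝ, -(lam * P β) = -P (lam • β) := fun β => by
      rw [hPhomog lam hlam.le β]
    simp_rw [hmul]
    rw [MeasureTheory.Measure.integral_comp_smul volume
      (fun β : Fin p → ℝ => Real.exp (-P β)) lam]
    rw [Module.finrank_fintype_fun_eq_card, Fintype.card_fin, smul_eq_mul]
    congr 1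
    rw [abs_of_nonneg (by positivity), _root_.zpow_neg, zpow_natCast]
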